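/- Let p ∈ (1,∞) and δ ≥ 0. There exist constants c, C > 0 depending only on p such that for all 3×3 real matrices P, Q the following two-sided equivalences hold: c·φ_{|P^sym|}(|P^sym − Q^sym|) ≤ |F(P) − F(Q)|² ≤ C·φ_{|P^sym|}(|P^sym − Q^sym|); c·(δ + |P^sym| + |P^sym − Q^sym|)^{p−2}·|P^sym − Q^sym|² ≤ |F(P) − F(Q)|² ≤ C·(δ + |P^sym| + |P^sym − Q^sym|)^{p−2}·|P^sym − Q^sym|²; and c·φ'_{|P^sym|}(|P^sym − Q^sym|) ≤ |S(P) − S(Q)| ≤ C·φ'_{|P^sym|}(|P^sym − Q^sym|). -/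

import Mathlib

/-- 3×3 real matrices, represented as functions. -/
abbrev M3 : Type := Fin 3 → Fin 3 → ℝ

/-- Symmetric part `P^sym = (P + Pᵀ)/2`. -/
noncomputable def sym3 (P : M3) : M3 := fun i j => (P i j + P j i) / 2

/-- Frobenius norm. -/
noncomputable def frob3 (P : M3) : ℝ := Real.sqrt (∑ i, ∑ j, (P i j) ^ 2)

/-- The derivative `φ'(t) = (δ+t)^(p-2)·t` of the N-function `φ = φ_{p,δ}`. -/
noncomputable def phiDeriv (p δ t : ℝ) : ℝ := (δ + t) ^ (p - 2) * t

/-- The shifted N-function `φ_a(t) = ∫₀ᵗ φ'(a+s)·s/(a+s) ds`. -/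
noncomputable def phiShift (p δ a t : ℝ) : ℝ :=
  ∫ s in (0:ℝ)..t, phiDeriv p δ (a + s) * s / (a + s)

/-- The shifted derivative `φ'_a(t) = φ'(a+t)·t/(a+t)`. -/
noncomputable def phiShiftDeriv (p δ a t : ℝ) : ℝ := phiDeriv p δ (a + t) * t / (a + t)

/-- The stress tensor `S(P) = (δ+|P^sym|)^{p−2} P^sym`. -/
noncomputable def Smat (p δ : ℝ) (P : M3) : M3 :=
  fun i j => (δ + frob3 (sym3 P)) ^ (p - 2) * sym3 P i j

/-- `F(P) = (δ+|P^sym|)^{(p−2)/2} P^sym`. -/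
noncomputable def Fmat (p δ : ℝ) (P : M3) : M3 :=
  fun i j => (δ + frob3 (sym3 P)) ^ ((p - 2) / 2) * sym3 P i j

open Real

noncomputable def ip (A B : M3) : ℝ := ∑ i, ∑ j, A i j * B i j

lemma ip_self_nonneg (A : M3) : 0 ≤ ip A A := by
  apply Finset.sum_nonneg; intro i _; apply Finset.sum_nonneg; intro j _
  exact mul_self_nonneg _

lemma frob3_nonneg (A : M3) : 0 ≤ frob3 A := Real.sqrt_nonneg _

lemma frob3_sq (A : M3) : (frob3 A) ^ 2 = ip A A := by
  rw [frob3, sq_sqrt]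
  · unfold ip; congr 1; ext i; congr 1; ext j; ring
  · apply Finset.sum_nonneg; intro i _; apply Finset.sum_nonneg; intro j _; positivity

lemma frob3_eq_zero {A : M3} (h : frob3 A = 0) : ∀ i j, A i j = 0 := by
  have h2 : ip A A = 0 := by rw [← frob3_sq, h]; ring
  intro i j
  have := Finset.sum_eq_zero_iff_of_nonneg (fun i _ => Finset.sum_nonneg
    (fun j _ => mul_self_nonneg (A i j))) |>.mp h2 i (Finset.mem_univ i)
  have := Finset.sum_eq_zero_iff_of_nonneg (fun j _ => mul_self_nonneg (A i j)) |>.mp this j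
    (Finset.mem_univ j)
  exact mul_self_eq_zero.mp this

lemma ip_sq_le (A B : M3) : (ip A B) ^ 2 ≤ ip A A * ip B B := by
  have key : (∑ x : Fin 3 × Fin 3, A x.1 x.2 * B x.1 x.2) ^ 2 ≤
      (∑ x : Fin 3 × Fin 3, (A x.1 x.2) ^ 2) * ∑ x : Fin 3 × Fin 3, (B x.1 x.2) ^ 2 :=
    Finset.sum_mul_sq_le_sq_mul_sq _ _ _
  simpa [ip, Fintype.sum_prod_type, sq, Finset.mul_sum] using key

lemma abs_ip_le (A B : M3) : |ip A B| ≤ frob3 A * frob3 B := by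
  have h := ip_sq_le A B
  rw [← frob3_sq, ← frob3_sq] at h
  apply abs_le_of_sq_le_sq
  · rw [mul_pow]; exact h
  · exact mul_nonneg (frob3_nonneg A) (frob3_nonneg B)

lemma frob3_triangle (A B : M3) : frob3 (A - B) ≤ frob3 A + frob3 B := by
  have h1 : (frob3 (A - B))^2 ≤ (frob3 A + frob3 B)^2 := by
    rw [frob3_sq]
    have hAB : ip (A - B) (A - B) = ip A A - 2 * ip A B + ip B B := by
      unfold ip
      simp only [Pi.sub_apply]
      rw [Finset.mul_sum, ← Finset.sum_sub_distrib, ← Finset.sum_add_distrib]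
      congr 1; ext i
      rw [Finset.mul_sum, ← Finset.sum_sub_distrib, ← Finset.sum_add_distrib]
      congr 1; ext j; ring
    rw [hAB]
    have h2 : -(ip A B) ≤ frob3 A * frob3 B := (abs_le.mp (abs_ip_le A B)).1 |> neg_le.mp
    have h3 := frob3_sq A; have h4 := frob3_sq B
    nlinarith [frob3_nonneg A, frob3_nonneg B]
  have := abs_le_of_sq_le_sq h1 (add_nonneg (frob3_nonneg A) (frob3_nonneg B))
  rwa [abs_of_nonneg (frob3_nonneg _)] at this

lemma frob3_neg_sub (A B : M3) : frob3 (A - B) = frob3 (B - A) := by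
  unfold frob3; congr 1; congr 1; ext i; congr 1; ext j
  simp only [Pi.sub_apply]; ring

lemma frob3_sub_le (A B : M3) : frob3 B ≤ frob3 A + frob3 (A - B) := by
  have : frob3 (A - (A - B)) ≤ frob3 A + frob3 (A - B) := frob3_triangle _ _
  have he : A - (A - B) = B := by ext i j; simp [Pi.sub_apply]
  rwa [he] at this

lemma two_rpow_abs_pos (z : ℝ) : 0 < (2:ℝ) ^ |z| := Real.rpow_pos_of_pos two_pos _

lemma one_le_two_rpow_abs (z : ℝ) : 1 ≤ (2:ℝ) ^ |z| := by
  calc (1:ℝ) = 2 ^ (0:ℝ) := (Real.rpow_zero 2).symm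
  _ ≤ 2 ^ |z| := Real.rpow_le_rpow_of_exponent_le one_le_two (abs_nonneg z)

/-- comparability of rpow on comparable bases -/
lemma rpow_comp2 {x y : ℝ} (z : ℝ) (hx : 0 < x) (hy : 0 < y) (hxy : x ≤ 2*y) (hyx : y ≤ 2*x) :
    x ^ z ≤ 2 ^ |z| * y ^ z := by
  rcases le_or_gt 0 z with hz | hz
  · rw [abs_of_nonneg hz]
    calc x ^ z ≤ (2*y) ^ z := Real.rpow_le_rpow hx.le hxy hz
    _ = 2 ^ z * y ^ z := Real.mul_rpow (by norm_num) hy.le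
  · rw [abs_of_neg hz]
    have h1 : y/2 ≤ x := by linarith
    have h2 : x ^ z ≤ (y/2) ^ z := Real.rpow_le_rpow_of_nonpos (by linarith) h1 hz.le
    have h3 : ((y:ℝ)/2) ^ z = y ^ z / 2 ^ z := Real.div_rpow hy.le (by norm_num) z
    have h4 : (2:ℝ) ^ (-z) = (2 ^ z)⁻¹ := Real.rpow_neg (by norm_num) z
    rw [h3] at h2
    rw [h4]
    have h5 : (0:ℝ) < 2 ^ z := Real.rpow_pos_of_pos two_pos z
    calc x ^ z ≤ y ^ z / 2 ^ z := h2
    _ = (2 ^ z)⁻¹ * y ^ z := by ring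

lemma rpow_split (x q : ℝ) (hx : 0 < x) : x ^ q = x ^ (q-1) * x := by
  rw [← Real.rpow_add_one hx.ne' (q-1)]; ring_nf

lemma hasDerivAt_fq (q δ t : ℝ) (h : 0 < δ + t) :
    HasDerivAt (fun s => (δ + s) ^ q * s) ((δ+t)^(q-1) * (δ + (1+q)*t)) t := by
  have h1 : HasDerivAt (fun s : ℝ => δ + s) 1 t := by
    simpa using (hasDerivAt_id t).const_add δ
  have h2 : HasDerivAt (fun s : ℝ => (δ + s) ^ q) (q * (δ+t) ^ (q-1) * 1) t :=
    (Real.hasDerivAt_rpow_const (Or.inl h.ne')).comp t h1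
  have h3 := h2.mul (hasDerivAt_id t)
  refine h3.congr_deriv ?_
  rw [rpow_split _ q h]
  simp only [id_eq]
  ring

lemma factor_bounds (q δ t : ℝ) (hq : -1 < q) (hδ : 0 ≤ δ) (ht : 0 ≤ t) :
    min 1 (1+q) * (δ+t) ≤ δ + (1+q)*t ∧ δ + (1+q)*t ≤ max 1 (1+q) * (δ+t) := by
  rcases le_or_gt 0 q with h | h
  · rw [min_eq_left (by linarith), max_eq_right (by linarith)]
    constructor <;> nlinarith
  · rw [min_eq_right (by linarith), max_eq_left (by linarith)]
    constructor <;> nlinarith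

lemma deriv_bounds (q δ t : ℝ) (hq : -1 < q) (hδ : 0 ≤ δ) (ht : 0 ≤ t) (h : 0 < δ + t) :
    min 1 (1+q) * (δ+t)^q ≤ (δ+t)^(q-1) * (δ + (1+q)*t) ∧
    (δ+t)^(q-1) * (δ + (1+q)*t) ≤ max 1 (1+q) * (δ+t)^q := by
  have hnn : 0 ≤ (δ+t)^(q-1) := Real.rpow_nonneg h.le _
  obtain ⟨hf1, hf2⟩ := factor_bounds q δ t hq hδ ht
  rw [rpow_split _ q h]
  constructor <;> nlinarith

lemma fq_nonneg (q δ t : ℝ) (hδ : 0 ≤ δ) (ht : 0 ≤ t) : 0 ≤ (δ+t)^q * t :=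
  mul_nonneg (Real.rpow_nonneg (by linarith) q) ht

lemma fq_mono (q δ : ℝ) (hq : -1 < q) (hδ : 0 ≤ δ) {u v : ℝ} (hu : 0 ≤ u) (huv : u ≤ v) :
    (δ+u)^q * u ≤ (δ+v)^q * v := by
  rcases eq_or_lt_of_le hu with h0 | h0
  · rw [← h0]; simpa using fq_nonneg q δ v hδ (le_trans hu huv)
  rcases eq_or_lt_of_le huv with h1 | h1
  · rw [h1]
  have hv : 0 < v := lt_trans h0 h1
  obtain ⟨ξ, hξ, hslope⟩ := exists_hasDerivAt_eq_slope (fun s => (δ+s)^q * s)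
      (fun s => (δ+s)^(q-1) * (δ+(1+q)*s)) h1
      (fun s hs => ((hasDerivAt_fq q δ s (by have := hs.1; linarith)).continuousAt).continuousWithinAt)
      (fun x hx => hasDerivAt_fq q δ x (by have := hx.1; linarith))
  have hξpos : 0 < δ + ξ := by have := hξ.1; linarith
  have hξnn : 0 ≤ ξ := by have := hξ.1; linarith
  have hd := (deriv_bounds q δ ξ hq hδ hξnn hξpos).1
  have hmin : 0 < min 1 (1+q) := by simp only [lt_min_iff]; constructor <;> linarith
  have hpow : 0 ≤ (δ+ξ)^q := Real.rpow_nonneg hξpos.le q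
  have hder : 0 ≤ ((δ+v)^q * v - (δ+u)^q * u) / (v - u) := by
    rw [← hslope]; nlinarith
  have hvu : 0 < v - u := by linarith
  have h2 : 0 * (v-u) ≤ (δ+v)^q * v - (δ+u)^q * u := (le_div_iff₀ hvu).mp hder
  linarith

lemma fq_diff_bounds (q δ : ℝ) (hq : -1 < q) (hδ : 0 ≤ δ) {b a : ℝ} (hb : 0 ≤ b) (hba : b ≤ a) :
    min 1 (1+q) / (2 ^ |q| * 2) * ((δ+a)^q * (a-b)) ≤ (δ+a)^q * a - (δ+b)^q * b ∧
    (δ+a)^q * a - (δ+b)^q * b ≤ (max 1 (1+q) * 2^|q| + 2) * ((δ+a)^q * (a-b)) := by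
  have hκ : (0:ℝ) < 2 ^ |q| := two_rpow_abs_pos q
  have hmin : 0 < min 1 (1+q) := by simp only [lt_min_iff]; constructor <;> linarith
  have hmax : (0:ℝ) < max 1 (1+q) := lt_max_of_lt_left one_pos
  rcases eq_or_lt_of_le hba with heq | hlt
  · rw [heq]; simp
  have ha : 0 < a := lt_of_le_of_lt hb hlt
  have hK : 0 ≤ (δ+a)^q := Real.rpow_nonneg (by linarith) q
  constructor
  · -- lower bound
    set b' := max b (a/2) with hb'def
    have hb'a : b' < a := max_lt hlt (by linarith)
    have hb'pos : 0 < b' := lt_of_lt_of_le (by linarith : 0 < a/2) (le_max_right _ _)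
    obtain ⟨ξ, hξ, hslope⟩ := exists_hasDerivAt_eq_slope (fun s => (δ+s)^q * s)
        (fun s => (δ+s)^(q-1) * (δ+(1+q)*s)) hb'a
        (fun s hs => ((hasDerivAt_fq q δ s (by have := hs.1; linarith)).continuousAt).continuousWithinAt)
        (fun x hx => hasDerivAt_fq q δ x (by have := hx.1; linarith))
    have hξ2 : a/2 < ξ := lt_of_le_of_lt (le_max_right _ _) hξ.1
    have hξpos : 0 < δ + ξ := by linarith
    have hd := (deriv_bounds q δ ξ hq hδ (by linarith) hξpos).1
    -- (δ+a)^q ≤ 2^|q| * (δ+ξ)^q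
    have hcomp : (δ+a)^q ≤ 2^|q| * (δ+ξ)^q :=
      rpow_comp2 q (by linarith) hξpos (by linarith) (by nlinarith [hξ.2])
    have hfb' : (δ+b)^q * b ≤ (δ+b')^q * b' := fq_mono q δ hq hδ hb (le_max_left _ _)
    have hab' : (a - b)/2 ≤ a - b' := by
      rcases max_cases b (a/2) with ⟨h1, h2⟩ | ⟨h1, h2⟩ <;> rw [hb'def, h1] <;> linarith
    have hslope2 : (δ+a)^q * a - (δ+b')^q * b' = ((δ+ξ)^(q-1) * (δ+(1+q)*ξ)) * (a - b') := by
      rw [hslope, div_mul_cancel₀ _ (ne_of_gt (by linarith : (0:ℝ) < a - b'))]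
    have hpowξ : 0 ≤ (δ+ξ)^q := Real.rpow_nonneg hξpos.le q
    have step1 : min 1 (1+q) * (δ+ξ)^q * ((a-b)/2) ≤ (δ+a)^q * a - (δ+b')^q * b' := by
      rw [hslope2]
      have h1 : min 1 (1+q) * (δ+ξ)^q * ((a-b)/2) ≤ min 1 (1+q) * (δ+ξ)^q * (a - b') :=
        mul_le_mul_of_nonneg_left hab' (by positivity)
      have h2 : min 1 (1+q) * (δ+ξ)^q * (a-b') ≤ ((δ+ξ)^(q-1) * (δ+(1+q)*ξ)) * (a - b') :=
        mul_le_mul_of_nonneg_right hd (by linarith)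
      linarith
    have step2 : min 1 (1+q) / (2 ^ |q| * 2) * ((δ+a)^q * (a-b))
        ≤ min 1 (1+q) * (δ+ξ)^q * ((a-b)/2) := by
      rw [div_mul_eq_mul_div, div_le_iff₀ (by positivity)]
      have hab : 0 ≤ a - b := by linarith
      calc min 1 (1+q) * ((δ+a)^q * (a-b))
          ≤ min 1 (1+q) * ((2^|q| * (δ+ξ)^q) * (a-b)) := by
            apply mul_le_mul_of_nonneg_left _ hmin.le
            exact mul_le_mul_of_nonneg_right hcomp hab
        _ = min 1 (1+q) * (δ+ξ)^q * ((a-b)/2) * (2^|q| * 2) := by ring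
    linarith
  · -- upper bound
    have hfbnn : 0 ≤ (δ+b)^q * b := fq_nonneg q δ b hδ hb
    have hKab : 0 ≤ (δ+a)^q * (a-b) := mul_nonneg hK (by linarith)
    rcases le_or_gt b (a/2) with hcase | hcase
    · have h1 : (δ+a)^q * a - (δ+b)^q * b ≤ (δ+a)^q * a := by linarith
      have h2 : (δ+a)^q * a ≤ 2 * ((δ+a)^q * (a-b)) := by nlinarith
      nlinarith [mul_nonneg (mul_nonneg hmax.le hκ.le) hKab]
    · -- b > a/2, MVT on [b,a]
      obtain ⟨ξ, hξ, hslope⟩ := exists_hasDerivAt_eq_slope (fun s => (δ+s)^q * s)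
          (fun s => (δ+s)^(q-1) * (δ+(1+q)*s)) hlt
          (fun s hs => ((hasDerivAt_fq q δ s (by have := hs.1; linarith)).continuousAt).continuousWithinAt)
          (fun x hx => hasDerivAt_fq q δ x (by have := hx.1; linarith))
      have hξ2 : a/2 < ξ := lt_of_lt_of_le hcase hξ.1.le
      have hξpos : 0 < δ + ξ := by linarith
      have hd := (deriv_bounds q δ ξ hq hδ (by linarith) hξpos).2
      have hcomp : (δ+ξ)^q ≤ 2^|q| * (δ+a)^q :=
        rpow_comp2 q hξpos (by linarith) (by nlinarith [hξ.2]) (by linarith)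
      have hslope2 : (δ+a)^q * a - (δ+b)^q * b = ((δ+ξ)^(q-1) * (δ+(1+q)*ξ)) * (a - b) := by
        rw [hslope, div_mul_cancel₀ _ (ne_of_gt (by linarith : (0:ℝ) < a - b))]
      rw [hslope2]
      have hab : 0 ≤ a - b := by linarith
      calc ((δ+ξ)^(q-1) * (δ+(1+q)*ξ)) * (a - b)
          ≤ (max 1 (1+q) * (δ+ξ)^q) * (a-b) := mul_le_mul_of_nonneg_right hd hab
        _ ≤ (max 1 (1+q) * (2^|q| * (δ+a)^q)) * (a-b) := by
            apply mul_le_mul_of_nonneg_right _ hab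
            exact mul_le_mul_of_nonneg_left hcomp hmax.le
        _ = (max 1 (1+q) * 2^|q|) * ((δ+a)^q * (a-b)) := by ring
        _ ≤ (max 1 (1+q) * 2^|q| + 2) * ((δ+a)^q * (a-b)) := by nlinarith

lemma frob3_congr_sq (Z W : M3) (h : ∀ i j, (Z i j)^2 = (W i j)^2) : frob3 Z = frob3 W := by
  rw [frob3, frob3]
  congr 1
  exact Finset.sum_congr rfl fun i _ => Finset.sum_congr rfl fun j _ => h i j

lemma ip_sub_expand (A B : M3) : ip (A - B) (A - B) = ip A A - 2 * ip A B + ip B B := by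
  unfold ip
  simp only [Pi.sub_apply]
  rw [Finset.mul_sum, ← Finset.sum_sub_distrib, ← Finset.sum_add_distrib]
  congr 1; ext i
  rw [Finset.mul_sum, ← Finset.sum_sub_distrib, ← Finset.sum_add_distrib]
  congr 1; ext j; ring

lemma frob3_comb_sq (s r : ℝ) (A B : M3) :
    (frob3 (fun i j => s * A i j - r * B i j))^2
      = s^2 * ip A A - 2*(s*r)*(ip A B) + r^2 * ip B B := by
  rw [frob3_sq]
  unfold ip
  have h : ∀ (i j : Fin 3), (s*A i j - r*B i j)*(s*A i j - r*B i j)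
      = s^2*(A i j*A i j) - 2*(s*r)*(A i j*B i j) + r^2*(B i j*B i j) := by intro i j; ring
  simp only [h]
  rw [Finset.mul_sum, Finset.mul_sum, Finset.mul_sum, ← Finset.sum_sub_distrib,
    ← Finset.sum_add_distrib]
  congr 1; ext i
  rw [Finset.mul_sum, Finset.mul_sum, Finset.mul_sum, ← Finset.sum_sub_distrib,
    ← Finset.sum_add_distrib]

noncomputable def cdq (q : ℝ) : ℝ := min (min 1 (1+q) / (2 ^ |q| * 2)) 2⁻¹
noncomputable def CDq (q : ℝ) : ℝ := max 1 (1+q) * 2^|q| + 2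

lemma cdq_pos {q : ℝ} (hq : -1 < q) : 0 < cdq q := by
  have hκ : (0:ℝ) < 2 ^ |q| := two_rpow_abs_pos q
  have hmin : 0 < min 1 (1+q) := by simp only [lt_min_iff]; constructor <;> linarith
  simp only [cdq, lt_min_iff]
  constructor
  · positivity
  · norm_num

lemma CDq_pos (q : ℝ) : 0 < CDq q := by
  have hκ : (0:ℝ) < 2 ^ |q| := two_rpow_abs_pos q
  have hmax : (0:ℝ) < max 1 (1+q) := lt_max_of_lt_left one_pos
  simp only [CDq]; positivity

lemma CDq_ge_two (q : ℝ) : 2 ≤ CDq q := by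
  have hκ : (0:ℝ) < 2 ^ |q| := two_rpow_abs_pos q
  have hmax : (0:ℝ) < max 1 (1+q) := lt_max_of_lt_left one_pos
  simp only [CDq]; nlinarith

set_option maxHeartbeats 2000000 in
lemma key_le (q δ : ℝ) (hq : -1 < q) (hδ : 0 ≤ δ) (A B : M3) (hba : frob3 B ≤ frob3 A) :
    (cdq q)^2 / 2 ^ |2*q| * ((δ + frob3 A + frob3 B) ^ (2*q) * (frob3 (A - B))^2)
      ≤ (frob3 (fun i j => (δ + frob3 A)^q * A i j - (δ + frob3 B)^q * B i j))^2 ∧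
    (frob3 (fun i j => (δ + frob3 A)^q * A i j - (δ + frob3 B)^q * B i j))^2
      ≤ (CDq q)^2 * 2 ^ |2*q| * ((δ + frob3 A + frob3 B) ^ (2*q) * (frob3 (A - B))^2) := by
  set α := frob3 A with hα
  set β := frob3 B with hβ
  have hα0 : 0 ≤ α := frob3_nonneg A
  have hβ0 : 0 ≤ β := frob3_nonneg B
  have hκ2 : (0:ℝ) < 2 ^ |2*q| := two_rpow_abs_pos _
  have hcd : 0 < cdq q := cdq_pos hq
  have hCD : 0 < CDq q := CDq_pos q
  set e := ip A B with he
  set Y := (frob3 (fun i j => (δ + α)^q * A i j - (δ + β)^q * B i j))^2 with hYdef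
  set X := (frob3 (A - B))^2 with hXdef
  have hX0 : 0 ≤ X := sq_nonneg _
  have hipA : ip A A = α^2 := (frob3_sq A).symm
  have hipB : ip B B = β^2 := (frob3_sq B).symm
  have hXexp : X = (α - β)^2 + 2*(α*β - e) := by
    rw [hXdef, frob3_sq, ip_sub_expand, hipA, hipB]; ring
  have hYexp : Y = ((δ+α)^q * α - (δ+β)^q * β)^2
      + 2*((δ+α)^q * (δ+β)^q)*(α*β - e) := by
    rw [hYdef, frob3_comb_sq, hipA, hipB]; ring
  have hCS := abs_ip_le A B
  rw [← hα, ← hβ, ← he] at hCS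
  have hu0 : 0 ≤ α*β - e := by have := (abs_le.mp hCS).2; linarith
  have hu2 : α*β - e ≤ 2*(α*β) := by have := (abs_le.mp hCS).1; linarith
  clear_value α β e Y X
  rcases le_or_gt (δ + α) 0 with hz | hz
  · -- degenerate: δ = 0, α = 0, β = 0
    have hδ0 : δ = 0 := le_antisymm (by linarith) hδ
    have hα00 : α = 0 := le_antisymm (by linarith) hα0
    have hβ00 : β = 0 := le_antisymm (by linarith [hba, hα00]) hβ0
    have he0 : e = 0 := by
      have h1 := hCS
      rw [hα00, hβ00] at h1
      simpa [abs_nonpos_iff] using h1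
    have hX00 : X = 0 := by rw [hXexp, hα00, hβ00, he0]; ring
    have hY00 : Y = 0 := by rw [hYexp, hα00, hβ00, he0]; ring
    rw [hX00, hY00]
    constructor <;> simp
  · -- main case
    set u := α*β - e with hu
    set D := (δ+α)^q * α - (δ+β)^q * β with hD
    set Ssum := (δ+α)^q * α + (δ+β)^q * β with hS
    set W := ((δ+α)^q)^2 with hW
    have hW0 : 0 ≤ W := sq_nonneg _
    have hKnn : 0 ≤ (δ+α)^q := Real.rpow_nonneg hz.le q
    have hD0 : 0 ≤ D := by
      have := fq_mono q δ hq hδ hβ0 hba; rw [hD]; linarith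
    obtain ⟨hdlo, hdhi⟩ := fq_diff_bounds q δ hq hδ hβ0 hba
    have hab0 : 0 ≤ (δ+α)^q * (α - β) := mul_nonneg hKnn (by linarith)
    have hsum0 : 0 ≤ (δ+α)^q * (α + β) := mul_nonneg hKnn (by linarith)
    -- endpoint: difference
    have hdlo' : cdq q * ((δ+α)^q * (α-β)) ≤ D := by
      refine le_trans ?_ hdlo
      apply mul_le_mul_of_nonneg_right _ hab0
      exact min_le_left _ _
    have hdhi' : D ≤ CDq q * ((δ+α)^q * (α-β)) := by
      rw [hD]; exact hdhi
    have E0lo : (cdq q)^2 * (W * (α-β)^2) ≤ D^2 := by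
      have := mul_self_le_mul_self (by positivity) hdlo'
      calc (cdq q)^2 * (W * (α-β)^2) = (cdq q * ((δ+α)^q * (α-β))) * (cdq q * ((δ+α)^q * (α-β))) := by
            rw [hW]; ring
        _ ≤ D * D := this
        _ = D^2 := (sq D).symm
    have E0hi : D^2 ≤ (CDq q)^2 * (W * (α-β)^2) := by
      have := mul_self_le_mul_self hD0 hdhi'
      calc D^2 = D * D := sq D
        _ ≤ (CDq q * ((δ+α)^q * (α-β))) * (CDq q * ((δ+α)^q * (α-β))) := this
        _ = (CDq q)^2 * (W * (α-β)^2) := by rw [hW]; ring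
    -- endpoint: sum
    have hfβfα : (δ+β)^q * β ≤ (δ+α)^q * α := fq_mono q δ hq hδ hβ0 hba
    have hfβ0 : 0 ≤ (δ+β)^q * β := fq_nonneg q δ β hδ hβ0
    have hslo' : cdq q * ((δ+α)^q * (α+β)) ≤ Ssum := by
      have h1 : cdq q ≤ 2⁻¹ := min_le_right _ _
      have h2 : cdq q * ((δ+α)^q * (α+β)) ≤ 2⁻¹ * ((δ+α)^q * (α+β)) :=
        mul_le_mul_of_nonneg_right h1 hsum0
      have hKβ : (δ+α)^q * β ≤ (δ+α)^q * α := mul_le_mul_of_nonneg_left hba hKnn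
      have hexp : (δ+α)^q * (α+β) = (δ+α)^q * α + (δ+α)^q * β := by ring
      have h3 : 2⁻¹ * ((δ+α)^q * (α+β)) ≤ (δ+α)^q * α := by
        rw [hexp]; linarith
      rw [hS]; linarith
    have hshi' : Ssum ≤ CDq q * ((δ+α)^q * (α+β)) := by
      have h1 : Ssum ≤ 2 * ((δ+α)^q * α) := by rw [hS]; linarith
      have hKβ : 0 ≤ (δ+α)^q * β := mul_nonneg hKnn hβ0
      have hexp : (δ+α)^q * (α+β) = (δ+α)^q * α + (δ+α)^q * β := by ring
      have h2 : 2 * ((δ+α)^q * α) ≤ 2 * ((δ+α)^q * (α+β)) := by rw [hexp]; linarith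
      have h3 : 2 * ((δ+α)^q * (α+β)) ≤ CDq q * ((δ+α)^q * (α+β)) :=
        mul_le_mul_of_nonneg_right (CDq_ge_two q) hsum0
      linarith
    have hSsum0 : 0 ≤ Ssum := by rw [hS]; positivity
    have ESlo : (cdq q)^2 * (W * (α+β)^2) ≤ Ssum^2 := by
      have := mul_self_le_mul_self (by positivity) hslo'
      calc (cdq q)^2 * (W * (α+β)^2)
          = (cdq q * ((δ+α)^q * (α+β))) * (cdq q * ((δ+α)^q * (α+β))) := by rw [hW]; ring
        _ ≤ Ssum * Ssum := this
        _ = Ssum^2 := (sq Ssum).symm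
    have EShi : Ssum^2 ≤ (CDq q)^2 * (W * (α+β)^2) := by
      have := mul_self_le_mul_self hSsum0 hshi'
      calc Ssum^2 = Ssum * Ssum := sq Ssum
        _ ≤ (CDq q * ((δ+α)^q * (α+β))) * (CDq q * ((δ+α)^q * (α+β))) := this
        _ = (CDq q)^2 * (W * (α+β)^2) := by rw [hW]; ring
    -- interpolation: cdq² W X ≤ Y ≤ CDq² W X
    set lam := (δ+α)^q * (δ+β)^q with hlam
    have hlam0 : 0 ≤ lam := mul_nonneg hKnn (Real.rpow_nonneg (by linarith) q)
    have hYu : Y = D^2 + 2*lam*u := hYexp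
    have hXu : X = (α-β)^2 + 2*u := hXexp
    have hSD : Ssum^2 = D^2 + 4*lam*(α*β) := by rw [hS, hD, hlam]; ring
    clear_value u D Ssum W lam
    have hmid : (cdq q)^2 * (W * X) ≤ Y ∧ Y ≤ (CDq q)^2 * (W * X) := by
      rcases eq_or_lt_of_le (mul_nonneg hα0 hβ0) with hab | hab
      · -- αβ = 0 so u = 0
        have hu00 : u = 0 := by
          have h1 : u ≤ 0 := by rw [← hab] at hu2; linarith
          linarith
        rw [hYu, hXu, hu00]
        constructor
        · calc (cdq q)^2 * (W * ((α-β)^2 + 2*0)) = (cdq q)^2 * (W * (α-β)^2) := by ring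
            _ ≤ D^2 := E0lo
            _ = D^2 + 2*lam*0 := by ring
        · calc D^2 + 2*lam*0 = D^2 := by ring
            _ ≤ (CDq q)^2 * (W * (α-β)^2) := E0hi
            _ = (CDq q)^2 * (W * ((α-β)^2 + 2*0)) := by ring
      · -- αβ > 0
        have hL : 0 < 2*(α*β) := by linarith
        constructor
        · rw [← mul_le_mul_iff_of_pos_left hL, hYu, hXu]
          have t1 : (2*(α*β) - u) * ((cdq q)^2 * (W * (α-β)^2)) ≤ (2*(α*β) - u) * D^2 :=
            mul_le_mul_of_nonneg_left E0lo (by linarith)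
          have t2 : u * ((cdq q)^2 * (W * (α+β)^2)) ≤ u * Ssum^2 :=
            mul_le_mul_of_nonneg_left ESlo hu0
          rw [hSD] at t2
          have id1 : 2*(α*β) * ((cdq q)^2 * (W * ((α-β)^2 + 2*u)))
              = (2*(α*β)-u) * ((cdq q)^2*(W*(α-β)^2)) + u * ((cdq q)^2*(W*(α+β)^2)) := by ring
          have id2 : 2*(α*β) * (D^2 + 2*lam*u)
              = (2*(α*β)-u)*D^2 + u*(D^2+4*lam*(α*β)) := by ring
          rw [id1, id2]
          exact add_le_add t1 t2
        · rw [← mul_le_mul_iff_of_pos_left hL, hYu, hXu]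
          have t1 : (2*(α*β) - u) * D^2 ≤ (2*(α*β) - u) * ((CDq q)^2 * (W * (α-β)^2)) :=
            mul_le_mul_of_nonneg_left E0hi (by linarith)
          have t2 : u * Ssum^2 ≤ u * ((CDq q)^2 * (W * (α+β)^2)) :=
            mul_le_mul_of_nonneg_left EShi hu0
          rw [hSD] at t2
          have id1 : 2*(α*β) * ((CDq q)^2 * (W * ((α-β)^2 + 2*u)))
              = (2*(α*β)-u) * ((CDq q)^2*(W*(α-β)^2)) + u * ((CDq q)^2*(W*(α+β)^2)) := by ring
          have id2 : 2*(α*β) * (D^2 + 2*lam*u)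
              = (2*(α*β)-u)*D^2 + u*(D^2+4*lam*(α*β)) := by ring
          rw [id2, id1]
          exact add_le_add t1 t2
    -- convert W to (δ+α+β)^(2q)
    have hW2 : W = (δ+α)^(2*q) := by
      rw [hW, sq, ← Real.rpow_add hz, two_mul]
    have hM0 : 0 < δ + α + β := by linarith
    have hMW : (δ+α+β)^(2*q) ≤ 2^|2*q| * W := by
      rw [hW2]
      exact rpow_comp2 (2*q) hM0 hz (by linarith) (by linarith)
    have hWM : W ≤ 2^|2*q| * (δ+α+β)^(2*q) := by
      rw [hW2]
      exact rpow_comp2 (2*q) hz hM0 (by linarith) (by linarith)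
    constructor
    · rw [div_mul_eq_mul_div, div_le_iff₀ hκ2]
      calc (cdq q)^2 * ((δ+α+β)^(2*q) * X)
          ≤ (cdq q)^2 * ((2^|2*q| * W) * X) := by
            apply mul_le_mul_of_nonneg_left _ (by positivity)
            exact mul_le_mul_of_nonneg_right hMW hX0
        _ = ((cdq q)^2 * (W * X)) * 2^|2*q| := by ring
        _ ≤ Y * 2^|2*q| := mul_le_mul_of_nonneg_right hmid.1 hκ2.le
    · calc Y ≤ (CDq q)^2 * (W * X) := hmid.2
        _ ≤ (CDq q)^2 * ((2^|2*q| * (δ+α+β)^(2*q)) * X) := by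
            apply mul_le_mul_of_nonneg_left _ (by positivity)
            exact mul_le_mul_of_nonneg_right hWM hX0
        _ = (CDq q)^2 * 2^|2*q| * ((δ+α+β)^(2*q) * X) := by ring

lemma phiShiftDeriv_eq (p δ a t : ℝ) (ha : 0 ≤ a) (ht : 0 ≤ t) :
    phiShiftDeriv p δ a t = (δ + a + t) ^ (p-2) * t := by
  unfold phiShiftDeriv phiDeriv
  rcases eq_or_lt_of_le (add_nonneg ha ht) with h0 | h0
  · have ht0 : t = 0 := by linarith [ha, ht]
    rw [ht0]; simp
  · have hb : δ + (a + t) = δ + a + t := by ring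
    rw [hb]
    field_simp

lemma phiShift_as_integral (p δ a t : ℝ) (hδ : 0 ≤ δ) (ha : 0 ≤ a) (ht : 0 ≤ t) :
    phiShift p δ a t = ∫ s in (0:ℝ)..t, (δ + a + s) ^ (p-2) * s := by
  unfold phiShift phiDeriv
  apply intervalIntegral.integral_congr
  intro s hs
  rw [Set.uIcc_of_le ht] at hs
  have hs0 : 0 ≤ s := hs.1
  rcases eq_or_lt_of_le (add_nonneg ha hs0) with h0 | h0
  · have hss : s = 0 := by linarith [ha, hs0]
    rw [hss]; simp
  · show (δ + (a + s)) ^ (p-2) * (a + s) * s / (a + s) = (δ + a + s) ^ (p-2) * s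
    have hb : δ + (a + s) = δ + a + s := by ring
    rw [hb]
    field_simp

lemma continuous_rpow_pos_exp {r : ℝ} (hr : 0 < r) : Continuous (fun s : ℝ => s ^ r) := by
  rw [continuous_iff_continuousAt]
  intro x
  exact Real.continuousAt_rpow_const x r (Or.inr hr.le)

noncomputable def cP (p : ℝ) : ℝ := min ((2 ^ |p-2|)⁻¹ / 4) (1/p)
noncomputable def CP (p : ℝ) : ℝ := 2 ^ |p-2|

lemma cP_pos {p : ℝ} (hp : 1 < p) : 0 < cP p := by
  have := two_rpow_abs_pos (p-2)
  simp only [cP, lt_min_iff]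
  constructor
  · positivity
  · positivity

lemma CP_pos (p : ℝ) : 0 < CP p := two_rpow_abs_pos (p-2)

lemma phiShift_comp (p δ a t : ℝ) (hp : 1 < p) (hδ : 0 ≤ δ) (ha : 0 ≤ a) (ht : 0 ≤ t) :
    cP p * ((δ + a + t) ^ (p-2) * t^2) ≤ phiShift p δ a t ∧
    phiShift p δ a t ≤ CP p * ((δ + a + t) ^ (p-2) * t^2) := by
  have hκ : (0:ℝ) < 2 ^ |p-2| := two_rpow_abs_pos (p-2)
  have hκ1 : (1:ℝ) ≤ 2 ^ |p-2| := one_le_two_rpow_abs (p-2)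
  rw [phiShift_as_integral p δ a t hδ ha ht]
  rcases eq_or_lt_of_le ht with ht0 | ht0
  · rw [← ht0]
    simp
  rcases eq_or_lt_of_le (add_nonneg hδ ha) with hc0 | hc0
  · -- δ = a = 0
    have hδ0 : δ = 0 := by linarith [hδ, ha]
    have ha0 : a = 0 := by linarith [hδ, ha]
    subst hδ0 ha0
    have heq : ∀ s ∈ Set.uIcc (0:ℝ) t, (0 + 0 + s) ^ (p-2) * s = s ^ (p-1) := by
      intro s hs
      rw [Set.uIcc_of_le ht] at hs
      rcases eq_or_lt_of_le hs.1 with h0 | h0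
      · rw [← h0]
        rw [Real.zero_rpow (by linarith : p - 1 ≠ 0)]
        norm_num
      · rw [show (0:ℝ) + 0 + s = s by ring, ← Real.rpow_add_one h0.ne' (p-2),
          show p - 2 + 1 = p - 1 by ring]
    rw [intervalIntegral.integral_congr heq, integral_rpow (Or.inl (by linarith)),
      show p - 1 + 1 = p by ring, Real.zero_rpow (by positivity : p ≠ 0)]
    have hbase : (0:ℝ) + 0 + t = t := by ring
    rw [hbase]
    have htp : t ^ (p-2) * t^2 = t ^ p := by
      rw [show ((t:ℝ)^2 : ℝ) = t ^ ((2:ℕ):ℝ) from (Real.rpow_natCast t 2).symm,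
        ← Real.rpow_add ht0]
      norm_num
    rw [htp]
    have htppos : 0 < t ^ p := Real.rpow_pos_of_pos ht0 p
    constructor
    · have h1 : cP p ≤ 1/p := min_le_right _ _
      calc cP p * t ^ p ≤ (1/p) * t^p := mul_le_mul_of_nonneg_right h1 htppos.le
        _ = (t^p - 0)/p := by ring
    · have h2 : t^p/p ≤ t^p := by
        rw [div_le_iff₀ (by linarith : (0:ℝ) < p)]
        nlinarith
      calc (t^p - 0)/p = t^p/p := by ring
        _ ≤ t^p := h2
        _ = 1 * t^p := (one_mul _).symm
        _ ≤ CP p * t^p := mul_le_mul_of_nonneg_right hκ1 htppos.le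
  · -- 0 < δ + a
    have hT0 : (0:ℝ) ≤ (δ + a + t)^(p-2) := Real.rpow_nonneg (by linarith) _
    have hcont : ContinuousOn (fun s : ℝ => (δ + a + s)^(p-2) * s) (Set.Icc 0 t) := by
      intro s hs
      have hpos : 0 < δ + a + s := by have := hs.1; linarith
      have h1 : ContinuousAt (fun s : ℝ => δ + a + s) s := by fun_prop
      have h2 : ContinuousAt (fun s : ℝ => (δ + a + s)^(p-2)) s :=
        (Real.continuousAt_rpow_const _ _ (Or.inl hpos.ne')).comp h1
      exact (h2.mul continuousAt_id).continuousWithinAt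
    have hInt : ∀ u v : ℝ, 0 ≤ u → u ≤ v → v ≤ t →
        IntervalIntegrable (fun s => (δ+a+s)^(p-2)*s) MeasureTheory.volume u v := by
      intro u v hu huv hvt
      apply ContinuousOn.intervalIntegrable
      apply hcont.mono
      rw [Set.uIcc_of_le huv]
      exact Set.Icc_subset_Icc hu hvt
    constructor
    · -- lower bound
      have hsplit := intervalIntegral.integral_add_adjacent_intervals
        (hInt 0 (t/2) le_rfl (by linarith) (by linarith))
        (hInt (t/2) t (by linarith) (by linarith) le_rfl)
      have h1 : 0 ≤ ∫ s in (0:ℝ)..(t/2), (δ+a+s)^(p-2)*s :=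
        intervalIntegral.integral_nonneg (by linarith)
          (fun u hu => mul_nonneg (Real.rpow_nonneg (by linarith [hu.1]) _) hu.1)
      have hptw : ∀ s ∈ Set.Icc (t/2) t,
          (2 ^ |p-2|)⁻¹ * (δ+a+t)^(p-2) * (t/2) ≤ (δ+a+s)^(p-2)*s := by
        intro s hs
        obtain ⟨hs1, hs2⟩ := hs
        have hspos : 0 < δ + a + s := by linarith
        have hpow : (δ+a+t)^(p-2) ≤ 2^|p-2| * (δ+a+s)^(p-2) :=
          rpow_comp2 (p-2) (by linarith) hspos (by linarith) (by linarith)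
        have h3 : (2^|p-2|)⁻¹ * (δ+a+t)^(p-2) ≤ (δ+a+s)^(p-2) := by
          have h4 : (2^|p-2|)⁻¹ * (δ+a+t)^(p-2) ≤ (2^|p-2|)⁻¹ * (2^|p-2| * (δ+a+s)^(p-2)) :=
            mul_le_mul_of_nonneg_left hpow (by positivity)
          have h5 : (2^|p-2|)⁻¹ * (2^|p-2| * (δ+a+s)^(p-2)) = (δ+a+s)^(p-2) := by
            field_simp
          linarith
        exact mul_le_mul h3 hs1 (by linarith) (Real.rpow_nonneg hspos.le _)
      have hmono := intervalIntegral.integral_mono_on (by linarith : t/2 ≤ t)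
        intervalIntegrable_const (hInt (t/2) t (by linarith) (by linarith) le_rfl) hptw
      rw [intervalIntegral.integral_const, smul_eq_mul] at hmono
      have hfin : cP p * ((δ + a + t)^(p-2) * t^2)
          ≤ (t - t/2) * ((2 ^ |p-2|)⁻¹ * (δ+a+t)^(p-2) * (t/2)) := by
        have hle : cP p ≤ (2 ^ |p-2|)⁻¹/4 := min_le_left _ _
        have : cP p * ((δ + a + t)^(p-2) * t^2) ≤ (2 ^ |p-2|)⁻¹/4 * ((δ + a + t)^(p-2) * t^2) :=
          mul_le_mul_of_nonneg_right hle (by positivity)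
        calc cP p * ((δ + a + t)^(p-2) * t^2)
            ≤ (2 ^ |p-2|)⁻¹/4 * ((δ + a + t)^(p-2) * t^2) := this
          _ = (t - t/2) * ((2 ^ |p-2|)⁻¹ * (δ+a+t)^(p-2) * (t/2)) := by ring
      linarith
    · -- upper bound
      rcases le_or_gt 2 p with hp2 | hp2
      · -- p ≥ 2
        have hptw : ∀ s ∈ Set.Icc (0:ℝ) t, (δ+a+s)^(p-2)*s ≤ (δ+a+t)^(p-2)*s := by
          intro s hs
          exact mul_le_mul_of_nonneg_right
            (Real.rpow_le_rpow (by linarith [hs.1]) (by linarith [hs.2]) (by linarith)) hs.1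
        have hmono := intervalIntegral.integral_mono_on ht (hInt 0 t le_rfl ht le_rfl)
          ((continuous_const.mul continuous_id').intervalIntegrable _ _) hptw
        simp only [Pi.mul_apply] at hmono
        rw [intervalIntegral.integral_const_mul, integral_id] at hmono
        have : (δ+a+t)^(p-2) * ((t^2 - 0^2)/2) ≤ CP p * ((δ+a+t)^(p-2) * t^2) := by
          have ht2 : (0:ℝ) ≤ (δ+a+t)^(p-2) * t^2 := by positivity
          have : (δ+a+t)^(p-2) * ((t^2 - 0^2)/2) = ((δ+a+t)^(p-2) * t^2)/2 := by ring
          rw [this]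
          calc ((δ+a+t)^(p-2) * t^2)/2 ≤ (δ+a+t)^(p-2) * t^2 := by linarith
            _ = 1 * ((δ+a+t)^(p-2) * t^2) := (one_mul _).symm
            _ ≤ CP p * ((δ+a+t)^(p-2) * t^2) := mul_le_mul_of_nonneg_right hκ1 ht2
        linarith
      · rcases le_or_gt t (δ + a) with hct | hct
        · -- p < 2, t ≤ δ+a
          have hptw : ∀ s ∈ Set.Icc (0:ℝ) t,
              (δ+a+s)^(p-2)*s ≤ (2^|p-2| * (δ+a+t)^(p-2))*s := by
            intro s hs
            have hspos : 0 < δ + a + s := by linarith [hs.1]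
            exact mul_le_mul_of_nonneg_right
              (rpow_comp2 (p-2) hspos (by linarith) (by linarith [hs.2]) (by linarith [hs.1])) hs.1
          have hmono := intervalIntegral.integral_mono_on ht (hInt 0 t le_rfl ht le_rfl)
            ((continuous_const.mul continuous_id').intervalIntegrable _ _) hptw
          simp only [Pi.mul_apply] at hmono
          rw [intervalIntegral.integral_const_mul, integral_id] at hmono
          have : (2^|p-2| * (δ+a+t)^(p-2)) * ((t^2 - 0^2)/2) ≤ CP p * ((δ+a+t)^(p-2) * t^2) := by
            have ht2 : (0:ℝ) ≤ 2^|p-2| * ((δ+a+t)^(p-2) * t^2) := by positivity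
            have hid : (2^|p-2| * (δ+a+t)^(p-2)) * ((t^2 - 0^2)/2)
                = (2^|p-2| * ((δ+a+t)^(p-2) * t^2))/2 := by ring
            rw [hid]
            show (2^|p-2| * ((δ+a+t)^(p-2) * t^2))/2 ≤ 2^|p-2| * ((δ+a+t)^(p-2) * t^2)
            linarith
          linarith
        · -- p < 2, δ+a < t
          have hptw : ∀ s ∈ Set.Icc (0:ℝ) t, (δ+a+s)^(p-2)*s ≤ s^(p-1) := by
            intro s hs
            rcases eq_or_lt_of_le hs.1 with h0 | h0
            · rw [← h0, Real.zero_rpow (by linarith : p - 1 ≠ 0)]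
              simp
            · have h1 : (δ+a+s)^(p-2) ≤ s^(p-2) :=
                Real.rpow_le_rpow_of_nonpos h0 (by linarith) (by linarith)
              calc (δ+a+s)^(p-2)*s ≤ s^(p-2)*s := mul_le_mul_of_nonneg_right h1 hs.1
                _ = s^(p-1) := by
                  rw [← Real.rpow_add_one h0.ne' (p-2), show p - 2 + 1 = p - 1 by ring]
          have hmono := intervalIntegral.integral_mono_on ht (hInt 0 t le_rfl ht le_rfl)
            ((continuous_rpow_pos_exp (by linarith : (0:ℝ) < p - 1)).intervalIntegrable _ _) hptw
          rw [integral_rpow (Or.inl (by linarith)), show p - 1 + 1 = p by ring,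
            Real.zero_rpow (by positivity : p ≠ 0)] at hmono
          have htp : t ^ (p-2) * t^2 = t ^ p := by
            rw [show ((t:ℝ)^2 : ℝ) = t ^ ((2:ℕ):ℝ) from (Real.rpow_natCast t 2).symm,
              ← Real.rpow_add ht0]
            norm_num
          have hpowt : t^(p-2) ≤ 2^|p-2| * (δ+a+t)^(p-2) :=
            rpow_comp2 (p-2) ht0 (by linarith) (by linarith) (by linarith)
          have hfin : (t^p - 0)/p ≤ CP p * ((δ+a+t)^(p-2) * t^2) := by
            have htppos : (0:ℝ) < t ^ p := Real.rpow_pos_of_pos ht0 p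
            have h2 : (t^p - 0)/p ≤ t^p := by
              rw [div_le_iff₀ (by linarith : (0:ℝ) < p)]
              nlinarith
            have h3 : t^p ≤ 2^|p-2| * ((δ+a+t)^(p-2) * t^2) := by
              rw [← htp]
              calc t^(p-2) * t^2 ≤ (2^|p-2| * (δ+a+t)^(p-2)) * t^2 :=
                    mul_le_mul_of_nonneg_right hpowt (sq_nonneg t)
                _ = 2^|p-2| * ((δ+a+t)^(p-2) * t^2) := by ring
            calc (t^p - 0)/p ≤ t^p := h2
              _ ≤ 2^|p-2| * ((δ+a+t)^(p-2) * t^2) := h3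
          linarith

lemma key_full (q δ : ℝ) (hq : -1 < q) (hδ : 0 ≤ δ) (A B : M3) :
    (cdq q)^2 / 2 ^ |2*q| * ((δ + frob3 A + frob3 B) ^ (2*q) * (frob3 (A - B))^2)
      ≤ (frob3 (fun i j => (δ + frob3 A)^q * A i j - (δ + frob3 B)^q * B i j))^2 ∧
    (frob3 (fun i j => (δ + frob3 A)^q * A i j - (δ + frob3 B)^q * B i j))^2
      ≤ (CDq q)^2 * 2 ^ |2*q| * ((δ + frob3 A + frob3 B) ^ (2*q) * (frob3 (A - B))^2) := by
  rcases le_total (frob3 B) (frob3 A) with h | h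
  · exact key_le q δ hq hδ A B h
  · have hswap := key_le q δ hq hδ B A h
    have h1 : frob3 (B - A) = frob3 (A - B) := (frob3_neg_sub A B).symm
    have h2 : frob3 (fun i j => (δ + frob3 B)^q * B i j - (δ + frob3 A)^q * A i j)
        = frob3 (fun i j => (δ + frob3 A)^q * A i j - (δ + frob3 B)^q * B i j) :=
      frob3_congr_sq _ _ (fun i j => by ring)
    have h3 : δ + frob3 B + frob3 A = δ + frob3 A + frob3 B := by ring
    rw [h1, h2, h3] at hswap
    exact hswap

/-- For `p ∈ (1,∞)` there exist `c, C > 0` depending only on `p` such that for all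
`δ ≥ 0` and all 3×3 matrices `P, Q`:
`|F(P)−F(Q)|² ∼ φ_{|P^sym|}(|P^sym−Q^sym|)
             ∼ (δ+|P^sym|+|P^sym−Q^sym|)^{p−2}·|P^sym−Q^sym|²` and
`|S(P)−S(Q)| ∼ φ'_{|P^sym|}(|P^sym−Q^sym|)` (two-sided bounds). -/
theorem hammer_shifted_equivalences (p : ℝ) (hp : 1 < p) :
    ∃ c C : ℝ, 0 < c ∧ 0 < C ∧
      ∀ δ : ℝ, 0 ≤ δ → ∀ P Q : M3,
        (c * phiShift p δ (frob3 (sym3 P)) (frob3 (sym3 P - sym3 Q))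
            ≤ (frob3 (Fmat p δ P - Fmat p δ Q)) ^ 2 ∧
          (frob3 (Fmat p δ P - Fmat p δ Q)) ^ 2
            ≤ C * phiShift p δ (frob3 (sym3 P)) (frob3 (sym3 P - sym3 Q))) ∧
        (c * (δ + frob3 (sym3 P) + frob3 (sym3 P - sym3 Q)) ^ (p - 2)
              * (frob3 (sym3 P - sym3 Q)) ^ 2
            ≤ (frob3 (Fmat p δ P - Fmat p δ Q)) ^ 2 ∧
          (frob3 (Fmat p δ P - Fmat p δ Q)) ^ 2
            ≤ C * (δ + frob3 (sym3 P) + frob3 (sym3 P - sym3 Q)) ^ (p - 2)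
              * (frob3 (sym3 P - sym3 Q)) ^ 2) ∧
        (c * phiShiftDeriv p δ (frob3 (sym3 P)) (frob3 (sym3 P - sym3 Q))
            ≤ frob3 (Smat p δ P - Smat p δ Q) ∧
          frob3 (Smat p δ P - Smat p δ Q)
            ≤ C * phiShiftDeriv p δ (frob3 (sym3 P)) (frob3 (sym3 P - sym3 Q))) := by
  have hq1 : (-1:ℝ) < (p-2)/2 := by linarith
  have hq2 : (-1:ℝ) < p-2 := by linarith
  set κ2 := (2:ℝ) ^ |p-2| with hκ2def
  have hκ2 : 0 < κ2 := two_rpow_abs_pos _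
  have hκ21 : 1 ≤ κ2 := one_le_two_rpow_abs _
  set cF1 := (cdq ((p-2)/2))^2 / 2 ^ |p-2| with hcF1def
  set CF1 := (CDq ((p-2)/2))^2 * 2 ^ |p-2| with hCF1def
  set cS2 := (cdq (p-2))^2 / 2 ^ |2*(p-2)| with hcS2def
  set CS2 := (CDq (p-2))^2 * 2 ^ |2*(p-2)| with hCS2def
  have hcF1p : 0 < cF1 := div_pos (pow_pos (cdq_pos hq1) 2) (two_rpow_abs_pos _)
  have hCF1p : 0 < CF1 := mul_pos (pow_pos (CDq_pos _) 2) (two_rpow_abs_pos _)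
  have hcS2p : 0 < cS2 := div_pos (pow_pos (cdq_pos hq2) 2) (two_rpow_abs_pos _)
  have hCS2p : 0 < CS2 := mul_pos (pow_pos (CDq_pos _) 2) (two_rpow_abs_pos _)
  have hcPp : 0 < cP p := cP_pos hp
  have hCPp : 0 < CP p := CP_pos p
  set cc := min (cF1/κ2) (min (cF1/κ2/CP p) (Real.sqrt cS2 / κ2)) with hccdef
  set CC := max (CF1*κ2) (max (CF1*κ2/cP p) (Real.sqrt CS2 * κ2)) with hCCdef
  have hccp : 0 < cc := by
    have h1 : 0 < cF1/κ2 := div_pos hcF1p hκ2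
    have h2 : 0 < cF1/κ2/CP p := div_pos h1 hCPp
    have h3 : 0 < Real.sqrt cS2 / κ2 := div_pos (Real.sqrt_pos.mpr hcS2p) hκ2
    simp only [hccdef, lt_min_iff]
    exact ⟨h1, h2, h3⟩
  have hCCp : 0 < CC := lt_max_of_lt_left (mul_pos hCF1p hκ2)
  refine ⟨cc, CC, hccp, hCCp, ?_⟩
  intro δ hδ P Q
  set A := sym3 P with hAdef
  set B := sym3 Q with hBdef
  set α := frob3 A with hαdef
  set β := frob3 B with hβdef
  set t := frob3 (A - B) with htdef
  have hα0 : 0 ≤ α := frob3_nonneg A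
  have hβ0 : 0 ≤ β := frob3_nonneg B
  have ht0 : 0 ≤ t := frob3_nonneg _
  rcases eq_or_lt_of_le ht0 with htz | htpos
  · -- t = 0 : degenerate
    have hPQ : A = B := by
      funext i j
      have h1 := frob3_eq_zero htz.symm i j
      simp only [Pi.sub_apply] at h1
      linarith
    have hFeq : Fmat p δ P = Fmat p δ Q := by
      unfold Fmat; rw [← hAdef, ← hBdef, hPQ]
    have hSeq : Smat p δ P = Smat p δ Q := by
      unfold Smat; rw [← hAdef, ← hBdef, hPQ]
    have hF0 : frob3 (Fmat p δ P - Fmat p δ Q) = 0 := by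
      rw [hFeq, frob3]
      simp
    have hS0 : frob3 (Smat p δ P - Smat p δ Q) = 0 := by
      rw [hSeq, frob3]
      simp
    have hφ0 : phiShift p δ α 0 = 0 := intervalIntegral.integral_same
    have hd0 : phiShiftDeriv p δ α 0 = 0 := by
      simp [phiShiftDeriv]
    rw [← htz, hF0, hS0, hφ0, hd0]
    norm_num
  · -- main case
    have htri1 : t ≤ α + β := frob3_triangle A B
    have htri2 : β ≤ α + t := frob3_sub_le A B
    have hT0 : 0 < δ + α + t := by linarith
    have hR0 : 0 < δ + α + β := by linarith
    have hRT : (δ+α+β)^(p-2) ≤ κ2 * (δ+α+t)^(p-2) :=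
      rpow_comp2 (p-2) hR0 hT0 (by linarith) (by linarith)
    have hTR : (δ+α+t)^(p-2) ≤ κ2 * (δ+α+β)^(p-2) :=
      rpow_comp2 (p-2) hT0 hR0 (by linarith) (by linarith)
    have hRnn : 0 ≤ (δ+α+β)^(p-2) := Real.rpow_nonneg hR0.le _
    have hTnn : 0 ≤ (δ+α+t)^(p-2) := Real.rpow_nonneg hT0.le _
    have ht2 : (0:ℝ) ≤ t^2 := sq_nonneg t
    -- F bounds
    have hFd : frob3 (Fmat p δ P - Fmat p δ Q)
        = frob3 (fun i j => (δ + α)^((p-2)/2) * A i j - (δ + β)^((p-2)/2) * B i j) := rfl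
    obtain ⟨hkF1, hkF2⟩ := key_full ((p-2)/2) δ hq1 hδ A B
    rw [show 2*((p-2)/2) = p-2 by ring] at hkF1 hkF2
    rw [← hαdef, ← hβdef, ← htdef, ← hFd] at hkF1 hkF2
    set YF := (frob3 (Fmat p δ P - Fmat p δ Q))^2 with hYFdef
    have hYF0 : 0 ≤ YF := sq_nonneg _
    -- hkF1 : cF1 * ((δ+α+β)^(p-2) * t^2) ≤ YF ; hkF2 : YF ≤ CF1 * (...)
    have hTt2 : (δ+α+t)^(p-2)*t^2 ≤ κ2*((δ+α+β)^(p-2)*t^2) := by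
      calc (δ+α+t)^(p-2)*t^2 ≤ (κ2*(δ+α+β)^(p-2))*t^2 := mul_le_mul_of_nonneg_right hTR ht2
        _ = κ2*((δ+α+β)^(p-2)*t^2) := by ring
    have hRt2 : (δ+α+β)^(p-2)*t^2 ≤ κ2*((δ+α+t)^(p-2)*t^2) := by
      calc (δ+α+β)^(p-2)*t^2 ≤ (κ2*(δ+α+t)^(p-2))*t^2 := mul_le_mul_of_nonneg_right hRT ht2
        _ = κ2*((δ+α+t)^(p-2)*t^2) := by ring
    have hYlo : cF1/κ2 * ((δ+α+t)^(p-2)*t^2) ≤ YF := by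
      calc cF1/κ2 * ((δ+α+t)^(p-2)*t^2)
          ≤ cF1/κ2 * (κ2*((δ+α+β)^(p-2)*t^2)) :=
            mul_le_mul_of_nonneg_left hTt2 (by positivity)
        _ = cF1 * ((δ+α+β)^(p-2)*t^2) := by field_simp
        _ ≤ YF := hkF1
    have hYhi : YF ≤ CF1*κ2 * ((δ+α+t)^(p-2)*t^2) := by
      calc YF ≤ CF1 * ((δ+α+β)^(p-2)*t^2) := hkF2
        _ ≤ CF1 * (κ2*((δ+α+t)^(p-2)*t^2)) :=
            mul_le_mul_of_nonneg_left hRt2 hCF1p.le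
        _ = CF1*κ2 * ((δ+α+t)^(p-2)*t^2) := by ring
    have hTt2nn : 0 ≤ (δ+α+t)^(p-2)*t^2 := mul_nonneg hTnn ht2
    refine ⟨?_, ?_, ?_⟩
    · -- first equivalence (phiShift)
      obtain ⟨hφlo, hφhi⟩ := phiShift_comp p δ α t hp hδ hα0 ht0
      have hφ0 : 0 ≤ phiShift p δ α t := le_trans (by positivity) hφlo
      constructor
      · have hc1 : cc ≤ cF1/κ2/CP p :=
          le_trans (min_le_right _ _) (min_le_left _ _)
        calc cc * phiShift p δ α t ≤ cc * (CP p * ((δ+α+t)^(p-2)*t^2)) :=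
              mul_le_mul_of_nonneg_left hφhi hccp.le
          _ = (cc * CP p) * ((δ+α+t)^(p-2)*t^2) := by ring
          _ ≤ (cF1/κ2) * ((δ+α+t)^(p-2)*t^2) := by
              apply mul_le_mul_of_nonneg_right _ hTt2nn
              calc cc * CP p ≤ (cF1/κ2/CP p) * CP p := mul_le_mul_of_nonneg_right hc1 hCPp.le
                _ = cF1/κ2 := by field_simp
          _ ≤ YF := hYlo
      · have hC1 : CF1*κ2/cP p ≤ CC :=
          le_trans (le_max_left _ _) (le_max_right _ _)
        have hstep : (δ+α+t)^(p-2)*t^2 ≤ phiShift p δ α t / cP p := by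
          rw [le_div_iff₀ hcPp]
          calc (δ+α+t)^(p-2)*t^2 * cP p = cP p * ((δ+α+t)^(p-2)*t^2) := by ring
            _ ≤ phiShift p δ α t := hφlo
        calc YF ≤ CF1*κ2 * ((δ+α+t)^(p-2)*t^2) := hYhi
          _ ≤ CF1*κ2 * (phiShift p δ α t / cP p) :=
              mul_le_mul_of_nonneg_left hstep (by positivity)
          _ = (CF1*κ2/cP p) * phiShift p δ α t := by ring
          _ ≤ CC * phiShift p δ α t := mul_le_mul_of_nonneg_right hC1 hφ0
    · -- second equivalence
      constructor
      · have hc1 : cc ≤ cF1/κ2 := min_le_left _ _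
        calc cc * (δ+α+t)^(p-2) * t^2 = cc * ((δ+α+t)^(p-2)*t^2) := by ring
          _ ≤ (cF1/κ2) * ((δ+α+t)^(p-2)*t^2) := mul_le_mul_of_nonneg_right hc1 hTt2nn
          _ ≤ YF := hYlo
      · have hC1 : CF1*κ2 ≤ CC := le_max_left _ _
        calc YF ≤ CF1*κ2 * ((δ+α+t)^(p-2)*t^2) := hYhi
          _ ≤ CC * ((δ+α+t)^(p-2)*t^2) := mul_le_mul_of_nonneg_right hC1 hTt2nn
          _ = CC * (δ+α+t)^(p-2) * t^2 := by ring
    · -- third equivalence (S)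
      have hSd : frob3 (Smat p δ P - Smat p δ Q)
          = frob3 (fun i j => (δ + α)^(p-2) * A i j - (δ + β)^(p-2) * B i j) := rfl
      obtain ⟨hkS1, hkS2⟩ := key_full (p-2) δ hq2 hδ A B
      rw [← hαdef, ← hβdef, ← htdef, ← hSd] at hkS1 hkS2
      have hR2 : (δ+α+β)^(2*(p-2)) = ((δ+α+β)^(p-2))^2 := by
        rw [two_mul, Real.rpow_add hR0, sq]
      rw [hR2] at hkS1 hkS2
      set N := frob3 (Smat p δ P - Smat p δ Q) with hNdef
      have hN0 : 0 ≤ N := frob3_nonneg _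
      have hNlo : Real.sqrt cS2 * ((δ+α+β)^(p-2) * t) ≤ N := by
        apply le_of_sq_le_sq _ hN0
        calc (Real.sqrt cS2 * ((δ+α+β)^(p-2) * t))^2
            = cS2 * (((δ+α+β)^(p-2))^2 * t^2) := by
              rw [mul_pow, Real.sq_sqrt hcS2p.le, mul_pow]
          _ ≤ N^2 := hkS1
      have hNhi : N ≤ Real.sqrt CS2 * ((δ+α+β)^(p-2) * t) := by
        apply le_of_sq_le_sq _ (by positivity)
        calc N^2 ≤ CS2 * (((δ+α+β)^(p-2))^2 * t^2) := hkS2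
          _ = (Real.sqrt CS2 * ((δ+α+β)^(p-2) * t))^2 := by
              rw [mul_pow, Real.sq_sqrt hCS2p.le, mul_pow]
      rw [phiShiftDeriv_eq p δ α t hα0 ht0]
      have hTtnn : 0 ≤ (δ+α+t)^(p-2)*t := mul_nonneg hTnn ht0
      have hRtnn : 0 ≤ (δ+α+β)^(p-2)*t := mul_nonneg hRnn ht0
      have hTt : (δ+α+t)^(p-2)*t ≤ κ2*((δ+α+β)^(p-2)*t) := by
        calc (δ+α+t)^(p-2)*t ≤ (κ2*(δ+α+β)^(p-2))*t := mul_le_mul_of_nonneg_right hTR ht0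
          _ = κ2*((δ+α+β)^(p-2)*t) := by ring
      have hRt : (δ+α+β)^(p-2)*t ≤ κ2*((δ+α+t)^(p-2)*t) := by
        calc (δ+α+β)^(p-2)*t ≤ (κ2*(δ+α+t)^(p-2))*t := mul_le_mul_of_nonneg_right hRT ht0
          _ = κ2*((δ+α+t)^(p-2)*t) := by ring
      constructor
      · have hc1 : cc ≤ Real.sqrt cS2 / κ2 :=
          le_trans (min_le_right _ _) (min_le_right _ _)
        calc cc * ((δ+α+t)^(p-2) * t) ≤ cc * (κ2*((δ+α+β)^(p-2)*t)) :=
              mul_le_mul_of_nonneg_left hTt hccp.le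
          _ = (cc * κ2) * ((δ+α+β)^(p-2)*t) := by ring
          _ ≤ Real.sqrt cS2 * ((δ+α+β)^(p-2)*t) := by
              apply mul_le_mul_of_nonneg_right _ hRtnn
              calc cc * κ2 ≤ (Real.sqrt cS2 / κ2) * κ2 := mul_le_mul_of_nonneg_right hc1 hκ2.le
                _ = Real.sqrt cS2 := by field_simp
          _ ≤ N := hNlo
      · have hC1 : Real.sqrt CS2 * κ2 ≤ CC :=
          le_trans (le_max_right _ _) (le_max_right _ _)
        calc N ≤ Real.sqrt CS2 * ((δ+α+β)^(p-2) * t) := hNhi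
          _ ≤ Real.sqrt CS2 * (κ2*((δ+α+t)^(p-2)*t)) :=
              mul_le_mul_of_nonneg_left hRt (Real.sqrt_nonneg _)
          _ = (Real.sqrt CS2 * κ2) * ((δ+α+t)^(p-2)*t) := by ring
          _ ≤ CC * ((δ+α+t)^(p-2)*t) := mul_le_mul_of_nonneg_right hC1 hTtnn
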